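/- Let k ∈ ℕ and let 𝔸 and 𝔹 be relational structures on the sets A and A^k respectively. Assume I = (V, 𝒞) is an instance of CSP(𝔸), S_1, …, S_m are basic relations of 𝔹, σ_1, …, σ_m are tuples of elements of V^k, and r, s are positive integers such that: (1) 𝒫_𝔸^r(I) ⊢ S̄_i(σ̄_i) for each i = 1, …, m, and (2) 𝒫_𝔹^s(J) ⊢ G, where J is the instance (V^k, {(σ_i, S_i) : i = 1, …, m}) of CSP(𝔹). Then 𝒫_𝔸^{r+ks}(I) ⊢ G. -/

import Mathlib

namespace CSPPaper

/-- A relational structure on `A`: a family of finitary relations (the basic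
relations), a relation of arity `n` being a set of `n`-tuples `Fin n → A`. -/
structure RelStruct (A : Type) where
  basic : Set (Σ n : ℕ, Set (Fin n → A))

/-- A CSP instance with variables `V` over domain `A`: a set of constraints,
each consisting of a scope (a tuple of variables) and a constraint relation. -/
structure Instance (A : Type) (V : Type) where
  constraints : Set (Σ n : ℕ, (Fin n → V) × Set (Fin n → A))

/-- `f : V → A` is a solution of the instance `I`. -/
def Instance.Sol {A V : Type} (I : Instance A V) (f : V → A) : Prop :=
  ∀ c ∈ I.constraints, (fun i => f (c.2.1 i)) ∈ c.2.2

def Instance.Satisfiable {A V : Type} (I : Instance A V) : Prop :=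
  ∃ f, I.Sol f

/-- `I` is an instance of `CSP(𝔸)`: all its constraint relations are basic
relations of `𝔸`. -/
def IsCSPInstance {A V : Type} (𝔸 : RelStruct A) (I : Instance A V) : Prop :=
  ∀ c ∈ I.constraints, (⟨c.1, c.2.2⟩ : Σ n : ℕ, Set (Fin n → A)) ∈ 𝔸.basic

/-- An atom of a Datalog rule over the variable set `Fin r`: a predicate
(a relation on `A`) applied to a tuple of variables. -/
structure Atom (A : Type) (r : ℕ) where
  arity : ℕ
  scope : Fin arity → Fin r
  rel : Set (Fin arity → A)

def Atom.holds {A : Type} {r : ℕ} (a : Atom A r) (f : Fin r → A) : Prop :=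
  (fun i => f (a.scope i)) ∈ a.rel

/-- A rule of the `r`-ary maximal symmetric Datalog program `𝒫_𝔸^r` consistent
with `𝔸`: a linear Datalog rule on at most `r` variables, whose head is an IDB
(an arbitrary relation on `A` of arity at most `r`), whose body contains at most
one IDB atom (`idb`) and otherwise non-IDB atoms for basic relations of `𝔸`
of arity at most `r` (`edb`, without repetition), such that the rule is
consistent with `𝔸`, and, if the body contains an IDB atom, its mirror image is
also consistent with `𝔸`. -/
structure Rule (A : Type) (𝔸 : RelStruct A) (r : ℕ) where
  head : Atom A r
  idb : Option (Atom A r)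
  edb : List (Atom A r)
  head_arity : head.arity ≤ r
  idb_arity : ∀ a ∈ idb, a.arity ≤ r
  edb_arity : ∀ a ∈ edb, a.arity ≤ r
  edb_basic : ∀ a ∈ edb, (⟨a.arity, a.rel⟩ : Σ n : ℕ, Set (Fin n → A)) ∈ 𝔸.basic
  nodup : edb.Nodup
  consistent : ∀ f : Fin r → A,
    (∀ a ∈ idb, a.holds f) → (∀ a ∈ edb, a.holds f) → head.holds f
  mirror : ∀ a ∈ idb, ∀ f : Fin r → A,
    head.holds f → (∀ b ∈ edb, b.holds f) → a.holds f

/-- `Derives 𝔸 r I ρ R`: the `r`-ary maximal symmetric Datalog program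
`𝒫_𝔸^r` consistent with `𝔸`, run on the instance `I`, derives `R(ρ)`.
This holds if `(ρ, R)` is a constraint of `I`, or if some rule of `𝒫_𝔸^r`
with head `R(τ)` admits an evaluation `ω` of its variables into `V` with
`ω ∘ τ = ρ`, whose (at most one) IDB body atom is derived and whose non-IDB
body atoms are constraints of `I` under `ω`. -/
inductive Derives {A V : Type} (𝔸 : RelStruct A) (r : ℕ) (I : Instance A V) :
    ∀ {n : ℕ}, (Fin n → V) → Set (Fin n → A) → Prop
  | base {n : ℕ} (ρ : Fin n → V) (R : Set (Fin n → A)) :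
      (⟨n, ρ, R⟩ : Σ n : ℕ, (Fin n → V) × Set (Fin n → A)) ∈ I.constraints →
      Derives 𝔸 r I ρ R
  | step (rule : Rule A 𝔸 r) (ω : Fin r → V) :
      (∀ a ∈ rule.idb, Derives 𝔸 r I (fun i => ω (a.scope i)) a.rel) →
      (∀ a ∈ rule.edb,
        (⟨a.arity, fun i => ω (a.scope i), a.rel⟩ :
          Σ n : ℕ, (Fin n → V) × Set (Fin n → A)) ∈ I.constraints) →
      Derives 𝔸 r I (fun i => ω (rule.head.scope i)) rule.head.rel

/-- `𝒫_𝔸^r(I) ⊢ G`: the program derives a goal predicate, i.e. an empty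
relation of arity at most `r`. -/
def DerivesGoal {A V : Type} (𝔸 : RelStruct A) (r : ℕ) (I : Instance A V) : Prop :=
  ∃ (n : ℕ) (ρ : Fin n → V), n ≤ r ∧ Derives 𝔸 r I ρ (∅ : Set (Fin n → A))

/-- `𝒫_𝔸^r(I) ⊢ J`: the program run on `I` derives every constraint of `J`. -/
def DerivesInstance {A V : Type} (𝔸 : RelStruct A) (r : ℕ) (I J : Instance A V) : Prop :=
  ∀ c ∈ J.constraints, Derives 𝔸 r I c.2.1 c.2.2

/-- An `m`-ary operation `t` preserves the `n`-ary relation `R`. -/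
def PreservesRel {A : Type} {m n : ℕ} (t : (Fin m → A) → A) (R : Set (Fin n → A)) : Prop :=
  ∀ rows : Fin m → Fin n → A, (∀ j, rows j ∈ R) → (fun i => t (fun j => rows j i)) ∈ R

/-- A polymorphism of `𝔸`: an operation preserving all basic relations. -/
def IsPolymorphism {A : Type} {m : ℕ} (𝔸 : RelStruct A) (t : (Fin m → A) → A) : Prop :=
  ∀ R ∈ 𝔸.basic, PreservesRel t R.2

def ternaryOp {A : Type} (p : A → A → A → A) : (Fin 3 → A) → A :=
  fun v => p (v 0) (v 1) (v 2)

/-- A chain of `n` Hagemann–Mitschke terms: idempotent ternary operations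
`p 0, …, p n` with `p 0 x y z = x`, `p k x x y = p (k+1) x y y`, `p n x y z = z`. -/
def IsHMChain {A : Type} (n : ℕ) (p : ℕ → A → A → A → A) : Prop :=
  (∀ k ≤ n, ∀ x : A, p k x x x = x) ∧
  (∀ x y z : A, p 0 x y z = x) ∧
  (∀ x y z : A, p n x y z = z) ∧
  (∀ k < n, ∀ x y : A, p k x x y = p (k + 1) x y y)

def Pres3Set {A : Type} (p : A → A → A → A) (S : Set A) : Prop :=
  ∀ x y z, x ∈ S → y ∈ S → z ∈ S → p x y z ∈ S

def Pres3Rel {A : Type} (p : A → A → A → A) (E : Set (A × A)) : Prop :=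
  ∀ u v w, u ∈ E → v ∈ E → w ∈ E → (p u.1 v.1 w.1, p u.2 v.2 w.2) ∈ E

def PresOpSet {A : Type} {m : ℕ} (t : (Fin m → A) → A) (S : Set A) : Prop :=
  ∀ x : Fin m → A, (∀ j, x j ∈ S) → t x ∈ S

def PresOpRel {A : Type} {m : ℕ} (t : (Fin m → A) → A) (E : Set (A × A)) : Prop :=
  ∀ x y : Fin m → A, (∀ j, (x j, y j) ∈ E) → (t x, t y) ∈ E

/-- A path instance of length `len`: variables `1, …, len`, one unary
constraint `B i` on each variable `i ∈ [1, len]`, and one binary constraint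
`E i` with scope `(i, i+1)` for each `i ∈ [1, len-1]`. -/
structure PathInstance (A : Type) where
  len : ℕ
  B : ℕ → Set A
  E : ℕ → Set (A × A)

/-- A solution of the subinstance of the path instance `I` induced by `[a, b]`. -/
def IsSolutionOn {A : Type} (I : PathInstance A) (a b : ℕ) (s : ℕ → A) : Prop :=
  (∀ i, a ≤ i → i ≤ b → s i ∈ I.B i) ∧
  (∀ i, a ≤ i → i + 1 ≤ b → (s i, s (i + 1)) ∈ I.E i)

def IsSolution {A : Type} (I : PathInstance A) (s : ℕ → A) : Prop :=
  IsSolutionOn I 1 I.len s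

def unaryRel {A : Type} (S : Set A) : Set (Fin 1 → A) := {f | f 0 ∈ S}

def pairRel {A : Type} (E : Set (A × A)) : Set (Fin 2 → A) := {f | (f 0, f 1) ∈ E}

/-- The path instance `I`, presented as a CSP instance on the variable set `ℕ`. -/
def PathInstance.toInstance {A : Type} (I : PathInstance A) : Instance A ℕ where
  constraints :=
    {c | (∃ i, 1 ≤ i ∧ i ≤ I.len ∧
            c = ⟨1, fun _ => i, unaryRel (I.B i)⟩) ∨
         (∃ i, 1 ≤ i ∧ i + 1 ≤ I.len ∧
            c = ⟨2, ![i, i + 1], pairRel (I.E i)⟩)}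

/-- An `n`-braid in the path instance `I`: solutions `s 0, …, s n` and indices
`1 ≤ idx 1 < … < idx n ≤ I.len` with `s k (idx k) = s (k+1) (idx k)` and
`s (k-1) (idx (k+1)) = s k (idx (k+1))` for `k = 1, …, n-1`. -/
def IsBraid {A : Type} (I : PathInstance A) (n : ℕ) (s : ℕ → ℕ → A) (idx : ℕ → ℕ) : Prop :=
  (∀ k ≤ n, IsSolution I (s k)) ∧
  1 ≤ idx 1 ∧ idx n ≤ I.len ∧
  (∀ k, 1 ≤ k → k < n → idx k < idx (k + 1)) ∧
  (∀ k, 1 ≤ k → k + 1 ≤ n →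
    s k (idx k) = s (k + 1) (idx k) ∧ s (k - 1) (idx (k + 1)) = s k (idx (k + 1)))

/-- The binary constraint of `I` with scope `(i, i+1)` is subdirect. -/
def SubdirectAt {A : Type} (I : PathInstance A) (i : ℕ) : Prop :=
  (I.B i).Nonempty ∧ (I.B (i + 1)).Nonempty ∧
  (∀ a ∈ I.B i, ∃ b ∈ I.B (i + 1), (a, b) ∈ I.E i) ∧
  (∀ b ∈ I.B (i + 1), ∃ a ∈ I.B i, (a, b) ∈ I.E i)

/-- The subinstance of `I` induced by `[a, b]` is subdirect. -/
def SubdirectOn {A : Type} (I : PathInstance A) (a b : ℕ) : Prop :=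
  ∀ i, a ≤ i → i + 1 ≤ b → SubdirectAt I i

def Subdirect {A : Type} (I : PathInstance A) : Prop := SubdirectOn I 1 I.len

/-- The sets `C_i`: `C 1 = B 1` and
`C (i+1) = {b ∈ B (i+1) | ∃ c ∈ C i, (c, b) ∈ E i}`. -/
def reachSet {A : Type} (I : PathInstance A) : ℕ → Set A
  | 0 => ∅
  | 1 => I.B 1
  | (i + 2) => {b ∈ I.B (i + 2) | ∃ c ∈ reachSet I (i + 1), (c, b) ∈ I.E (i + 1)}

/-- `B_{i,i+1}` contains a backward edge: an edge `(b, c) ∈ E i` with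
`b ∈ B i \ C i` and `c ∈ C (i+1)`. -/
def BackwardAt {A : Type} (I : PathInstance A) (i : ℕ) : Prop :=
  1 ≤ i ∧ i + 1 ≤ I.len ∧
  ∃ b c, (b, c) ∈ I.E i ∧ b ∈ I.B i ∧ b ∉ reachSet I i ∧ c ∈ reachSet I (i + 1)

/-- Adjacency in the graph `Conn(I_{[lo,hi]})`: its vertices are pairs `(i, a)`
with `a ∈ B i`, `lo ≤ i ≤ hi`, and `(i, a)` is adjacent to `(i+1, b)` whenever
`(a, b) ∈ E i`. -/
def connAdj {A : Type} (I : PathInstance A) (lo hi : ℕ) (p q : ℕ × A) : Prop :=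
  lo ≤ p.1 ∧ p.1 + 1 ≤ hi ∧ q.1 = p.1 + 1 ∧
  p.2 ∈ I.B p.1 ∧ q.2 ∈ I.B q.1 ∧ (p.2, q.2) ∈ I.E p.1

/-- `λ_{I,lo,hi}`: the pairs `(a, b) ∈ B lo × B hi` joined by an undirected path
in `Conn(I_{[lo,hi]})`. -/
def lamRel {A : Type} (I : PathInstance A) (lo hi : ℕ) : Set (A × A) :=
  {ab | ab.1 ∈ I.B lo ∧ ab.2 ∈ I.B hi ∧
    Relation.ReflTransGen (fun p q => connAdj I lo hi p q ∨ connAdj I lo hi q p)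
      (lo, ab.1) (hi, ab.2)}

open Classical in
/-- The variable set `U` of the instance `I_λ`: the variables `1`, `len`, and
`i, i+1` for every index `i` such that `B_{i,i+1}` has a backward edge. -/
noncomputable def lamVars {A : Type} (I : PathInstance A) : Finset ℕ :=
  (Finset.Icc 1 I.len).filter
    (fun v => v = 1 ∨ v = I.len ∨ BackwardAt I v ∨ (2 ≤ v ∧ BackwardAt I (v - 1)))

/-- The `t`-th smallest element of `U` (`1`-indexed). -/
noncomputable def lamEnum {A : Type} (I : PathInstance A) (t : ℕ) : ℕ :=
  ((lamVars I).sort (· ≤ ·)).getD (t - 1) 0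

/-- The instance `I_λ`, presented as a path instance whose `t`-th variable is
the `t`-th smallest element of `U`: it consists of the subinstance of `I`
induced by `U`, where each gap between consecutive elements `u < w` of `U` with
`w > u + 1` is filled by the binary constraint `λ_{I,u,w}`. -/
noncomputable def lamInst {A : Type} (I : PathInstance A) : PathInstance A where
  len := (lamVars I).card
  B := fun t => I.B (lamEnum I t)
  E := fun t =>
    if lamEnum I (t + 1) = lamEnum I t + 1 then I.E (lamEnum I t)
    else lamRel I (lamEnum I t) (lamEnum I (t + 1))

/-- Unpacking an `m`-tuple of elements of `V^k` into an `m*k`-tuple of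
elements of `V`. -/
def unpackTuple {X : Type} {m k : ℕ} (σ : Fin m → Fin k → X) : Fin (m * k) → X :=
  fun t => σ t.divNat t.modNat

/-- Unpacking an `m`-ary relation on `A^k` into an `m*k`-ary relation on `A`. -/
def unpackRel {A : Type} {m k : ℕ} (U : Set (Fin m → Fin k → A)) :
    Set (Fin (m * k) → A) :=
  {t | ∃ u ∈ U, ∀ i : Fin (m * k), t i = u i.divNat i.modNat}

/-- The instance `I` has pathwidth at most `p`. -/
def PathwidthLE {A V : Type} (I : Instance A V) (p : ℕ) : Prop :=
  ∃ (m : ℕ) (U : Fin m → Set V),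
    (∀ v : V, ∃ i, v ∈ U i) ∧
    (∀ i, (U i).Finite ∧ (U i).ncard ≤ p + 1) ∧
    (∀ i j q : Fin m, i ≤ q → q ≤ j → ∀ v, v ∈ U i → v ∈ U j → v ∈ U q) ∧
    (∀ c ∈ I.constraints, ∃ i, Set.range c.2.1 ⊆ U i)

/-- `𝔸` has pathwidth duality `p`: for every unsatisfiable instance `I` of
`CSP(𝔸)` there is an unsatisfiable instance `J` of `CSP(𝔸)` of pathwidth at
most `p` such that identifying some variables of `J` (along `h`) yields a
subinstance of `I`. -/
def HasPathwidthDuality {A : Type} (𝔸 : RelStruct A) (p : ℕ) : Prop :=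
  ∀ (V : Type) (I : Instance A V), IsCSPInstance 𝔸 I → ¬I.Satisfiable →
    ∃ (W : Type) (J : Instance A W) (h : W → V),
      IsCSPInstance 𝔸 J ∧ ¬J.Satisfiable ∧ PathwidthLE J p ∧
      ∀ c ∈ J.constraints,
        (⟨c.1, fun i => h (c.2.1 i), c.2.2⟩ :
          Σ n : ℕ, (Fin n → V) × Set (Fin n → A)) ∈ I.constraints

/-- The `k`-th bubble power `𝔸^(k)` of `𝔸`: the relational structure on `A^k`
whose basic relations are all unary relations definable as conjunctions of
basic relations of `𝔸` (with identification of variables and dummy variables,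
but no existential quantification), and all binary relations
`E_ℐ = {(a, b) | ∀ (i,j) ∈ ℐ, a i = b j}` for `ℐ ⊆ [k]²`. -/
def bubblePower {A : Type} (𝔸 : RelStruct A) (k : ℕ) : RelStruct (Fin k → A) where
  basic :=
    {r | (∃ L : Set (Σ n : ℕ, (Fin n → Fin k) × Set (Fin n → A)),
            (∀ c ∈ L, (⟨c.1, c.2.2⟩ : Σ n : ℕ, Set (Fin n → A)) ∈ 𝔸.basic) ∧
            r = ⟨1, {f : Fin 1 → (Fin k → A) |
                      ∀ c ∈ L, (fun i => f 0 (c.2.1 i)) ∈ c.2.2}⟩) ∨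
         (∃ Idx : Set (Fin k × Fin k),
            r = ⟨2, {f : Fin 2 → (Fin k → A) | ∀ q ∈ Idx, f 0 q.1 = f 1 q.2}⟩)}
-- test basic lemmas
section Lemmas
variable {A V : Type} {𝔸 : RelStruct A} {I : Instance A V}

/-- Remap an atom's variables along a map of variable sets. -/
def Atom.remap {r r' : ℕ} (e : Fin r → Fin r') (a : Atom A r) : Atom A r' :=
  ⟨a.arity, fun i => e (a.scope i), a.rel⟩

lemma Atom.holds_remap {r r' : ℕ} (e : Fin r → Fin r') (a : Atom A r) (f : Fin r' → A) :
    (a.remap e).holds f ↔ a.holds (fun j => f (e j)) := Iff.rfl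

lemma derives_sound {r : ℕ} {f : V → A} (hf : I.Sol f) {n : ℕ} {ρ : Fin n → V}
    {R : Set (Fin n → A)} (h : Derives 𝔸 r I ρ R) : (fun i => f (ρ i)) ∈ R := by
  induction h with
  | base ρ R hc => exact hf _ hc
  | step rule ω hidb hedb ih =>
    exact rule.consistent (fun j => f (ω j)) (fun a ha => ih a ha) (fun a ha => hf _ (hedb a ha))

lemma derives_mono {r r' : ℕ} (hr : 1 ≤ r) (hrr' : r ≤ r') {n : ℕ} {ρ : Fin n → V}
    {R : Set (Fin n → A)} (h : Derives 𝔸 r I ρ R) : Derives 𝔸 r' I ρ R := by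
  classical
  induction h with
  | base ρ R hc => exact Derives.base ρ R hc
  | step rule ω hidb hedb ih =>
    set e : Fin r → Fin r' := Fin.castLE hrr' with he
    set ω' : Fin r' → V := fun i => if h : (i : ℕ) < r then ω ⟨i, h⟩ else ω ⟨0, hr⟩ with hω'
    have hωe : ∀ j : Fin r, ω' (e j) = ω j := by
      intro j; simp only [hω', he]
      rw [dif_pos (show ((Fin.castLE hrr' j : Fin r') : ℕ) < r from j.2)]
      exact congrArg ω (Fin.ext rfl)
    have key : ∀ a : Atom A r, ∀ f : Fin r' → A,
        (a.remap e).holds f ↔ a.holds (fun j => f (e j)) := fun a f => Iff.rfl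
    set rule' : Rule A 𝔸 r' :=
      { head := rule.head.remap e
        idb := rule.idb.map (Atom.remap e)
        edb := (rule.edb.map (Atom.remap e)).dedup
        head_arity := le_trans rule.head_arity hrr'
        idb_arity := by
          rintro a ha
          rcases Option.mem_map.mp ha with ⟨b, hb, rfl⟩
          exact le_trans (rule.idb_arity b hb) hrr'
        edb_arity := by
          intro a ha
          rcases List.mem_map.mp (List.mem_dedup.mp ha) with ⟨b, hb, rfl⟩
          exact le_trans (rule.edb_arity b hb) hrr'
        edb_basic := by
          intro a ha
          rcases List.mem_map.mp (List.mem_dedup.mp ha) with ⟨b, hb, rfl⟩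
          exact rule.edb_basic b hb
        nodup := List.nodup_dedup _
        consistent := by
          intro f hi hb
          exact rule.consistent (fun j => f (e j))
            (fun a ha => hi (a.remap e) (Option.mem_map.mpr ⟨a, ha, rfl⟩))
            (fun a ha => hb (a.remap e)
              (List.mem_dedup.mpr (List.mem_map.mpr ⟨a, ha, rfl⟩)))
        mirror := by
          rintro a ha f hh hb
          rcases Option.mem_map.mp ha with ⟨b, hb', rfl⟩
          exact rule.mirror b hb' (fun j => f (e j)) hh
            (fun a ha => hb (a.remap e)
              (List.mem_dedup.mpr (List.mem_map.mpr ⟨a, ha, rfl⟩))) } with hrule'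
    have hstep := Derives.step (𝔸 := 𝔸) (I := I) rule' ω'
      (by
        rintro a ha
        rcases Option.mem_map.mp ha with ⟨b, hb, rfl⟩
        have := ih b hb
        have heq : (fun i => ω' ((b.remap e).scope i)) = fun i => ω (b.scope i) := by
          funext i; exact hωe _
        rw [heq]; exact this)
      (by
        rintro a ha
        rcases List.mem_map.mp (List.mem_dedup.mp ha) with ⟨b, hb, rfl⟩
        have heq : (fun i => ω' ((b.remap e).scope i)) = fun i => ω (b.scope i) := by
          funext i; exact hωe _
        rw [show ((⟨(b.remap e).arity, fun i => ω' ((b.remap e).scope i), (b.remap e).rel⟩ : Σ n : ℕ, (Fin n → V) × Set (Fin n → A)))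
           = ⟨b.arity, fun i => ω (b.scope i), b.rel⟩ from by rw [heq]; rfl]
        exact hedb b hb)
    have heq : (fun i => ω' (rule'.head.scope i)) = fun i => ω (rule.head.scope i) := by
      funext i; exact hωe _
    rw [heq] at hstep
    exact hstep

end Lemmas
section Carry
variable {A V : Type} {𝔸 : RelStruct A} {I : Instance A V} {r c : ℕ}

/-- Product of a `c`-ary and an `n`-ary relation, on `c + n` coordinates. -/
def prodRel {c n : ℕ} (Q : Set (Fin c → A)) (R : Set (Fin n → A)) :
    Set (Fin (c + n) → A) :=
  {g | (fun i => g (Fin.castAdd n i)) ∈ Q ∧ (fun i => g (Fin.natAdd c i)) ∈ R}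

lemma carry (hI : IsCSPInstance 𝔸 I) (v0 : V) {π : Fin c → V} {Q : Set (Fin c → A)}
    (hQ : Derives 𝔸 (r + c) I π Q) {n : ℕ} {ρ : Fin n → V} {R : Set (Fin n → A)}
    (D : Derives 𝔸 r I ρ R) (hn : n ≤ r) :
    Derives 𝔸 (r + c) I (Fin.append π ρ) (prodRel Q R) := by
  classical
  revert hn
  induction D with
  | @base n ρ R hc =>
    intro hn
    have hωw' : ∀ i : Fin n,
        (Fin.append (fun j : Fin r => if h : (j : ℕ) < n then ρ ⟨j, h⟩ else v0) π)
          (Fin.castAdd c (Fin.castLE hn i)) = ρ i := by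
      intro i
      rw [Fin.append_left]
      rw [dif_pos (show ((Fin.castLE hn i : Fin r) : ℕ) < n from i.2)]
      exact congrArg ρ (Fin.ext rfl)
    have hstep := Derives.step (𝔸 := 𝔸) (I := I)
      { head := ⟨c + n,
          Fin.append (Fin.natAdd r) (fun i => Fin.castAdd c (Fin.castLE hn i)),
          prodRel Q R⟩
        idb := some ⟨c, Fin.natAdd r, Q⟩
        edb := [⟨n, fun i => Fin.castAdd c (Fin.castLE hn i), R⟩]
        head_arity := by show c + n ≤ r + c; omega
        idb_arity := by
          rintro a ha; rcases Option.mem_some_iff.mp ha with rfl; show c ≤ r + c; omega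
        edb_arity := by
          rintro a ha; rcases List.mem_singleton.mp ha with rfl; show n ≤ r + c; omega
        edb_basic := by
          rintro a ha; rcases List.mem_singleton.mp ha with rfl
          exact hI _ hc
        nodup := List.nodup_singleton _
        consistent := by
          intro f hi he
          have hQf : (fun t => f (Fin.natAdd r t)) ∈ Q := hi _ rfl
          have hRf : (fun i => f (Fin.castAdd c (Fin.castLE hn i))) ∈ R :=
            he _ (List.mem_singleton_self _)
          refine ⟨?_, ?_⟩
          · show (fun t => f (Fin.append (Fin.natAdd r)
              (fun i => Fin.castAdd c (Fin.castLE hn i)) (Fin.castAdd n t))) ∈ Q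
            simpa only [Fin.append_left] using hQf
          · show (fun i => f (Fin.append (Fin.natAdd r)
              (fun i => Fin.castAdd c (Fin.castLE hn i)) (Fin.natAdd c i))) ∈ R
            simpa only [Fin.append_right] using hRf
        mirror := by
          rintro a ha f hh _he
          rcases Option.mem_some_iff.mp ha with rfl
          have hh1 := hh.1
          show (fun t => f (Fin.natAdd r t)) ∈ Q
          simpa only [Fin.append_left] using hh1 }
      (Fin.append (fun j : Fin r => if h : (j : ℕ) < n then ρ ⟨j, h⟩ else v0) π)
      (by
        rintro a ha; rcases Option.mem_some_iff.mp ha with rfl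
        have heq : (fun t : Fin c =>
            (Fin.append (fun j : Fin r => if h : (j : ℕ) < n then ρ ⟨j, h⟩ else v0) π)
              (Fin.natAdd r t)) = π := by
          funext t; exact Fin.append_right _ _ t
        show Derives 𝔸 (r + c) I _ Q
        rw [heq]; exact hQ)
      (by
        rintro a ha; rcases List.mem_singleton.mp ha with rfl
        have heq : (fun i : Fin n =>
            (Fin.append (fun j : Fin r => if h : (j : ℕ) < n then ρ ⟨j, h⟩ else v0) π)
              (Fin.castAdd c (Fin.castLE hn i))) = ρ := funext hωw'
        show (⟨n, _, R⟩ : Σ n : ℕ, (Fin n → V) × Set (Fin n → A)) ∈ I.constraints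
        rw [heq]; exact hc)
    have heq : (fun i =>
        (Fin.append (fun j : Fin r => if h : (j : ℕ) < n then ρ ⟨j, h⟩ else v0) π)
          ((Fin.append (Fin.natAdd r) (fun i => Fin.castAdd c (Fin.castLE hn i))) i))
        = Fin.append π ρ := by
      funext i
      induction i using Fin.addCases with
      | left t => simp only [Fin.append_left, Fin.append_right]
      | right t => simp only [Fin.append_right]; exact hωw' t
    rw [heq] at hstep
    exact hstep
  | @step rule ω hidb hedb ih =>
    intro _hn
    have hmem : ∀ b ∈ rule.edb,
        (Atom.remap (Fin.castAdd c) b) ∈ (rule.edb.map (Atom.remap (Fin.castAdd c))).dedup :=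
      fun b hb => List.mem_dedup.mpr (List.mem_map.mpr ⟨b, hb, rfl⟩)
    have hmem' : ∀ b' ∈ (rule.edb.map (Atom.remap (Fin.castAdd c))).dedup,
        ∃ b ∈ rule.edb, b' = Atom.remap (Fin.castAdd c) b := by
      intro b' hb'
      rcases List.mem_map.mp (List.mem_dedup.mp hb') with ⟨b, hb, rfl⟩
      exact ⟨b, hb, rfl⟩
    have hedbev : ∀ b' ∈ (rule.edb.map (Fin.castAdd c |> Atom.remap)).dedup,
        (⟨b'.arity, fun i => (Fin.append ω π) (b'.scope i), b'.rel⟩ :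
          Σ n : ℕ, (Fin n → V) × Set (Fin n → A)) ∈ I.constraints := by
      intro b' hb'
      rcases hmem' b' hb' with ⟨b, hb, rfl⟩
      have heq : (fun i => (Fin.append ω π) ((Atom.remap (Fin.castAdd c) b).scope i))
          = fun i => ω (b.scope i) := by
        funext i; exact Fin.append_left _ _ _
      have hsig : (⟨b.arity, (fun i => (Fin.append ω π) ((Atom.remap (Fin.castAdd c) b).scope i),
          b.rel)⟩ : Σ n : ℕ, (Fin n → V) × Set (Fin n → A))
          = ⟨b.arity, (fun i => ω (b.scope i), b.rel)⟩ :=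
        congrArg (fun u : Fin b.arity → V =>
          (⟨b.arity, (u, b.rel)⟩ : Σ n : ℕ, (Fin n → V) × Set (Fin n → A))) heq
      show (⟨b.arity, (fun i => (Fin.append ω π) ((Atom.remap (Fin.castAdd c) b).scope i),
        b.rel)⟩ : Σ n : ℕ, (Fin n → V) × Set (Fin n → A)) ∈ I.constraints
      rw [hsig]; exact hedb b hb
    rcases hopt : rule.idb with _ | a
    · -- no idb child
      have hstep := Derives.step (𝔸 := 𝔸) (I := I)
        { head := ⟨c + rule.head.arity,
            Fin.append (Fin.natAdd r) (fun i => Fin.castAdd c (rule.head.scope i)),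
            prodRel Q rule.head.rel⟩
          idb := some ⟨c, Fin.natAdd r, Q⟩
          edb := (rule.edb.map (Atom.remap (Fin.castAdd c))).dedup
          head_arity := by
            show c + rule.head.arity ≤ r + c
            have := rule.head_arity; omega
          idb_arity := by
            rintro a ha; rcases Option.mem_some_iff.mp ha with rfl; show c ≤ r + c; omega
          edb_arity := by
            intro b' hb'; rcases hmem' b' hb' with ⟨b, hb, rfl⟩
            show b.arity ≤ r + c
            have := rule.edb_arity b hb; omega
          edb_basic := by
            intro b' hb'; rcases hmem' b' hb' with ⟨b, hb, rfl⟩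
            exact rule.edb_basic b hb
          nodup := List.nodup_dedup _
          consistent := by
            intro f hi he
            have hQf : (fun t => f (Fin.natAdd r t)) ∈ Q := hi _ rfl
            have hhead : rule.head.holds (fun j => f (Fin.castAdd c j)) :=
              rule.consistent (fun j => f (Fin.castAdd c j))
                (by rw [hopt]; rintro a ha; exact absurd ha (by simp [Option.mem_def]))
                (fun b hb => he _ (hmem b hb))
            refine ⟨?_, ?_⟩
            · show (fun t => f (Fin.append (Fin.natAdd r)
                (fun i => Fin.castAdd c (rule.head.scope i)) (Fin.castAdd _ t))) ∈ Q
              simpa only [Fin.append_left] using hQf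
            · show (fun i => f (Fin.append (Fin.natAdd r)
                (fun i => Fin.castAdd c (rule.head.scope i)) (Fin.natAdd c i))) ∈ rule.head.rel
              simpa only [Fin.append_right, Atom.holds] using hhead
          mirror := by
            rintro a ha f hh _he
            rcases Option.mem_some_iff.mp ha with rfl
            have hh1 := hh.1
            show (fun t => f (Fin.natAdd r t)) ∈ Q
            simpa only [Fin.append_left] using hh1 }
        (Fin.append ω π)
        (by
          rintro a ha; rcases Option.mem_some_iff.mp ha with rfl
          have heq : (fun t : Fin c => (Fin.append ω π) (Fin.natAdd r t)) = π := by
            funext t; exact Fin.append_right _ _ t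
          show Derives 𝔸 (r + c) I _ Q
          rw [heq]; exact hQ)
        hedbev
      have heq : (fun i => (Fin.append ω π)
          ((Fin.append (Fin.natAdd r) (fun i => Fin.castAdd c (rule.head.scope i))) i))
          = Fin.append π (fun i => ω (rule.head.scope i)) := by
        funext i
        induction i using Fin.addCases with
        | left t => simp only [Fin.append_left, Fin.append_right]
        | right t => simp only [Fin.append_left, Fin.append_right]
      rw [heq] at hstep
      exact hstep
    · -- idb child a
      have hamem : a ∈ rule.idb := Option.mem_def.mpr hopt
      have hstep := Derives.step (𝔸 := 𝔸) (I := I)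
        { head := ⟨c + rule.head.arity,
            Fin.append (Fin.natAdd r) (fun i => Fin.castAdd c (rule.head.scope i)),
            prodRel Q rule.head.rel⟩
          idb := some ⟨c + a.arity,
            Fin.append (Fin.natAdd r) (fun i => Fin.castAdd c (a.scope i)),
            prodRel Q a.rel⟩
          edb := (rule.edb.map (Atom.remap (Fin.castAdd c))).dedup
          head_arity := by
            show c + rule.head.arity ≤ r + c
            have := rule.head_arity; omega
          idb_arity := by
            rintro a' ha'; rcases Option.mem_some_iff.mp ha' with rfl
            show c + a.arity ≤ r + c
            have := rule.idb_arity a hamem; omega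
          edb_arity := by
            intro b' hb'; rcases hmem' b' hb' with ⟨b, hb, rfl⟩
            show b.arity ≤ r + c
            have := rule.edb_arity b hb; omega
          edb_basic := by
            intro b' hb'; rcases hmem' b' hb' with ⟨b, hb, rfl⟩
            exact rule.edb_basic b hb
          nodup := List.nodup_dedup _
          consistent := by
            intro f hi he
            have hia : _ ∈ prodRel Q a.rel := hi _ rfl
            have hQf : (fun t => f (Fin.natAdd r t)) ∈ Q := by
              have := hia.1
              simpa only [Fin.append_left] using this
            have haf : a.holds (fun j => f (Fin.castAdd c j)) := by
              have := hia.2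
              show (fun i => f (Fin.castAdd c (a.scope i))) ∈ a.rel
              simpa only [Fin.append_right] using this
            have hhead : rule.head.holds (fun j => f (Fin.castAdd c j)) :=
              rule.consistent (fun j => f (Fin.castAdd c j))
                (by
                  rw [hopt]; rintro a' ha'
                  rcases Option.mem_some_iff.mp ha' with rfl
                  exact haf)
                (fun b hb => he _ (hmem b hb))
            refine ⟨?_, ?_⟩
            · show (fun t => f (Fin.append (Fin.natAdd r)
                (fun i => Fin.castAdd c (rule.head.scope i)) (Fin.castAdd _ t))) ∈ Q
              simpa only [Fin.append_left] using hQf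
            · show (fun i => f (Fin.append (Fin.natAdd r)
                (fun i => Fin.castAdd c (rule.head.scope i)) (Fin.natAdd c i))) ∈ rule.head.rel
              simpa only [Fin.append_right, Atom.holds] using hhead
          mirror := by
            rintro a' ha' f hh he
            rcases Option.mem_some_iff.mp ha' with rfl
            have hQf : (fun t => f (Fin.natAdd r t)) ∈ Q := by
              have := hh.1
              simpa only [Fin.append_left] using this
            have hheadf : rule.head.holds (fun j => f (Fin.castAdd c j)) := by
              have := hh.2
              show (fun i => f (Fin.castAdd c (rule.head.scope i))) ∈ rule.head.rel
              simpa only [Fin.append_right] using this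
            have haf : a.holds (fun j => f (Fin.castAdd c j)) :=
              rule.mirror a hamem (fun j => f (Fin.castAdd c j)) hheadf
                (fun b hb => he _ (hmem b hb))
            refine ⟨?_, ?_⟩
            · show (fun t => f (Fin.append (Fin.natAdd r)
                (fun i => Fin.castAdd c (a.scope i)) (Fin.castAdd _ t))) ∈ Q
              simpa only [Fin.append_left] using hQf
            · show (fun i => f (Fin.append (Fin.natAdd r)
                (fun i => Fin.castAdd c (a.scope i)) (Fin.natAdd c i))) ∈ a.rel
              simpa only [Fin.append_right, Atom.holds] using haf }
        (Fin.append ω π)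
        (by
          rintro a' ha'; rcases Option.mem_some_iff.mp ha' with rfl
          have heq : (fun i => (Fin.append ω π)
              ((Fin.append (Fin.natAdd r) (fun i => Fin.castAdd c (a.scope i))) i))
              = Fin.append π (fun i => ω (a.scope i)) := by
            funext i
            induction i using Fin.addCases with
            | left t => simp only [Fin.append_left, Fin.append_right]
            | right t => simp only [Fin.append_left, Fin.append_right]
          show Derives 𝔸 (r + c) I _ (prodRel Q a.rel)
          rw [heq]
          exact ih a hamem (rule.idb_arity a hamem))
        hedbev
      have heq : (fun i => (Fin.append ω π)
          ((Fin.append (Fin.natAdd r) (fun i => Fin.castAdd c (rule.head.scope i))) i))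
          = Fin.append π (fun i => ω (rule.head.scope i)) := by
        funext i
        induction i using Fin.addCases with
        | left t => simp only [Fin.append_left, Fin.append_right]
        | right t => simp only [Fin.append_left, Fin.append_right]
      rw [heq] at hstep
      exact hstep

end Carry
section Uncarry
variable {A V : Type} {𝔸 : RelStruct A} {I : Instance A V} {r c : ℕ}

lemma uncarry (hI : IsCSPInstance 𝔸 I) (v0 : V) {π : Fin c → V} {Q : Set (Fin c → A)}
    {n : ℕ} {ρ : Fin n → V} {R : Set (Fin n → A)}
    (D : Derives 𝔸 r I ρ R) (hn : n ≤ r)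
    (hQR : Derives 𝔸 (r + c) I (Fin.append π ρ) (prodRel Q R)) :
    Derives 𝔸 (r + c) I π Q := by
  classical
  revert hn hQR
  induction D with
  | @base n ρ R hc =>
    intro hn hQR
    have hωw' : ∀ i : Fin n,
        (Fin.append (fun j : Fin r => if h : (j : ℕ) < n then ρ ⟨j, h⟩ else v0) π)
          (Fin.castAdd c (Fin.castLE hn i)) = ρ i := by
      intro i
      rw [Fin.append_left]
      rw [dif_pos (show ((Fin.castLE hn i : Fin r) : ℕ) < n from i.2)]
      exact congrArg ρ (Fin.ext rfl)
    have hstep := Derives.step (𝔸 := 𝔸) (I := I)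
      { head := ⟨c, Fin.natAdd r, Q⟩
        idb := some ⟨c + n,
          Fin.append (Fin.natAdd r) (fun i => Fin.castAdd c (Fin.castLE hn i)),
          prodRel Q R⟩
        edb := [⟨n, fun i => Fin.castAdd c (Fin.castLE hn i), R⟩]
        head_arity := by show c ≤ r + c; omega
        idb_arity := by
          rintro a ha; rcases Option.mem_some_iff.mp ha with rfl; show c + n ≤ r + c; omega
        edb_arity := by
          rintro a ha; rcases List.mem_singleton.mp ha with rfl; show n ≤ r + c; omega
        edb_basic := by
          rintro a ha; rcases List.mem_singleton.mp ha with rfl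
          exact hI _ hc
        nodup := List.nodup_singleton _
        consistent := by
          intro f hi _he
          have hia : _ ∈ prodRel Q R := hi _ rfl
          have hh1 := hia.1
          show (fun t => f (Fin.natAdd r t)) ∈ Q
          simpa only [Fin.append_left] using hh1
        mirror := by
          rintro a ha f hh he
          rcases Option.mem_some_iff.mp ha with rfl
          have hQf : (fun t => f (Fin.natAdd r t)) ∈ Q := hh
          have hRf : (fun i => f (Fin.castAdd c (Fin.castLE hn i))) ∈ R :=
            he _ (List.mem_singleton_self _)
          refine ⟨?_, ?_⟩
          · show (fun t => f (Fin.append (Fin.natAdd r)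
              (fun i => Fin.castAdd c (Fin.castLE hn i)) (Fin.castAdd n t))) ∈ Q
            simpa only [Fin.append_left] using hQf
          · show (fun i => f (Fin.append (Fin.natAdd r)
              (fun i => Fin.castAdd c (Fin.castLE hn i)) (Fin.natAdd c i))) ∈ R
            simpa only [Fin.append_right] using hRf }
      (Fin.append (fun j : Fin r => if h : (j : ℕ) < n then ρ ⟨j, h⟩ else v0) π)
      (by
        rintro a ha; rcases Option.mem_some_iff.mp ha with rfl
        have heq : (fun i =>
            (Fin.append (fun j : Fin r => if h : (j : ℕ) < n then ρ ⟨j, h⟩ else v0) π)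
              ((Fin.append (Fin.natAdd r) (fun i => Fin.castAdd c (Fin.castLE hn i))) i))
            = Fin.append π ρ := by
          funext i
          induction i using Fin.addCases with
          | left t => simp only [Fin.append_left, Fin.append_right]
          | right t => simp only [Fin.append_right]; exact hωw' t
        show Derives 𝔸 (r + c) I _ (prodRel Q R)
        rw [heq]; exact hQR)
      (by
        rintro a ha; rcases List.mem_singleton.mp ha with rfl
        have heq : (fun i : Fin n =>
            (Fin.append (fun j : Fin r => if h : (j : ℕ) < n then ρ ⟨j, h⟩ else v0) π)
              (Fin.castAdd c (Fin.castLE hn i))) = ρ := funext hωw'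
        have hsig : (⟨n, (fun i =>
            (Fin.append (fun j : Fin r => if h : (j : ℕ) < n then ρ ⟨j, h⟩ else v0) π)
              (Fin.castAdd c (Fin.castLE hn i)), R)⟩ :
            Σ n : ℕ, (Fin n → V) × Set (Fin n → A)) = ⟨n, (ρ, R)⟩ :=
          congrArg (fun u : Fin n → V =>
            (⟨n, (u, R)⟩ : Σ n : ℕ, (Fin n → V) × Set (Fin n → A))) heq
        show (⟨n, (fun i =>
            (Fin.append (fun j : Fin r => if h : (j : ℕ) < n then ρ ⟨j, h⟩ else v0) π)
              (Fin.castAdd c (Fin.castLE hn i)), R)⟩ :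
            Σ n : ℕ, (Fin n → V) × Set (Fin n → A)) ∈ I.constraints
        rw [hsig]; exact hc)
    have heq : (fun t =>
        (Fin.append (fun j : Fin r => if h : (j : ℕ) < n then ρ ⟨j, h⟩ else v0) π)
          (Fin.natAdd r t)) = π := by
      funext t; exact Fin.append_right _ _ t
    rw [heq] at hstep
    exact hstep
  | @step rule ω hidb hedb ih =>
    intro _hn hQR
    have hmem : ∀ b ∈ rule.edb,
        (Atom.remap (Fin.castAdd c) b) ∈ (rule.edb.map (Atom.remap (Fin.castAdd c))).dedup :=
      fun b hb => List.mem_dedup.mpr (List.mem_map.mpr ⟨b, hb, rfl⟩)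
    have hmem' : ∀ b' ∈ (rule.edb.map (Atom.remap (Fin.castAdd c))).dedup,
        ∃ b ∈ rule.edb, b' = Atom.remap (Fin.castAdd c) b := by
      intro b' hb'
      rcases List.mem_map.mp (List.mem_dedup.mp hb') with ⟨b, hb, rfl⟩
      exact ⟨b, hb, rfl⟩
    have hedbev : ∀ b' ∈ (rule.edb.map (Fin.castAdd c |> Atom.remap)).dedup,
        (⟨b'.arity, fun i => (Fin.append ω π) (b'.scope i), b'.rel⟩ :
          Σ n : ℕ, (Fin n → V) × Set (Fin n → A)) ∈ I.constraints := by
      intro b' hb'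
      rcases hmem' b' hb' with ⟨b, hb, rfl⟩
      have heq : (fun i => (Fin.append ω π) ((Atom.remap (Fin.castAdd c) b).scope i))
          = fun i => ω (b.scope i) := by
        funext i; exact Fin.append_left _ _ _
      have hsig : (⟨b.arity, (fun i => (Fin.append ω π) ((Atom.remap (Fin.castAdd c) b).scope i),
          b.rel)⟩ : Σ n : ℕ, (Fin n → V) × Set (Fin n → A))
          = ⟨b.arity, (fun i => ω (b.scope i), b.rel)⟩ :=
        congrArg (fun u : Fin b.arity → V =>
          (⟨b.arity, (u, b.rel)⟩ : Σ n : ℕ, (Fin n → V) × Set (Fin n → A))) heq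
      show (⟨b.arity, (fun i => (Fin.append ω π) ((Atom.remap (Fin.castAdd c) b).scope i),
        b.rel)⟩ : Σ n : ℕ, (Fin n → V) × Set (Fin n → A)) ∈ I.constraints
      rw [hsig]; exact hedb b hb
    have hheadeq : (fun i => (Fin.append ω π)
        ((Fin.append (Fin.natAdd r) (fun i => Fin.castAdd c (rule.head.scope i))) i))
        = Fin.append π (fun i => ω (rule.head.scope i)) := by
      funext i
      induction i using Fin.addCases with
      | left t => simp only [Fin.append_left, Fin.append_right]
      | right t => simp only [Fin.append_left, Fin.append_right]
    rcases hopt : rule.idb with _ | a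
    · -- no idb child : directly produce Q at π
      have hstep := Derives.step (𝔸 := 𝔸) (I := I)
        { head := ⟨c, Fin.natAdd r, Q⟩
          idb := some ⟨c + rule.head.arity,
            Fin.append (Fin.natAdd r) (fun i => Fin.castAdd c (rule.head.scope i)),
            prodRel Q rule.head.rel⟩
          edb := (rule.edb.map (Atom.remap (Fin.castAdd c))).dedup
          head_arity := by show c ≤ r + c; omega
          idb_arity := by
            rintro a' ha'; rcases Option.mem_some_iff.mp ha' with rfl
            show c + rule.head.arity ≤ r + c
            have := rule.head_arity; omega
          edb_arity := by
            intro b' hb'; rcases hmem' b' hb' with ⟨b, hb, rfl⟩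
            show b.arity ≤ r + c
            have := rule.edb_arity b hb; omega
          edb_basic := by
            intro b' hb'; rcases hmem' b' hb' with ⟨b, hb, rfl⟩
            exact rule.edb_basic b hb
          nodup := List.nodup_dedup _
          consistent := by
            intro f hi _he
            have hia : _ ∈ prodRel Q rule.head.rel := hi _ rfl
            have hh1 := hia.1
            show (fun t => f (Fin.natAdd r t)) ∈ Q
            simpa only [Fin.append_left] using hh1
          mirror := by
            rintro a' ha' f hh he
            rcases Option.mem_some_iff.mp ha' with rfl
            have hQf : (fun t => f (Fin.natAdd r t)) ∈ Q := hh
            have hhead : rule.head.holds (fun j => f (Fin.castAdd c j)) :=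
              rule.consistent (fun j => f (Fin.castAdd c j))
                (by rw [hopt]; rintro a' ha'; exact absurd ha' (by simp [Option.mem_def]))
                (fun b hb => he _ (hmem b hb))
            refine ⟨?_, ?_⟩
            · show (fun t => f (Fin.append (Fin.natAdd r)
                (fun i => Fin.castAdd c (rule.head.scope i)) (Fin.castAdd _ t))) ∈ Q
              simpa only [Fin.append_left] using hQf
            · show (fun i => f (Fin.append (Fin.natAdd r)
                (fun i => Fin.castAdd c (rule.head.scope i)) (Fin.natAdd c i))) ∈ rule.head.rel
              simpa only [Fin.append_right, Atom.holds] using hhead }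
        (Fin.append ω π)
        (by
          rintro a' ha'; rcases Option.mem_some_iff.mp ha' with rfl
          show Derives 𝔸 (r + c) I _ (prodRel Q rule.head.rel)
          rw [hheadeq]; exact hQR)
        hedbev
      have heq : (fun t : Fin c => (Fin.append ω π) (Fin.natAdd r t)) = π := by
        funext t; exact Fin.append_right _ _ t
      rw [heq] at hstep
      exact hstep
    · -- idb child a : produce carried child fact, then recurse
      have hamem : a ∈ rule.idb := Option.mem_def.mpr hopt
      have hstep := Derives.step (𝔸 := 𝔸) (I := I)
        { head := ⟨c + a.arity,
            Fin.append (Fin.natAdd r) (fun i => Fin.castAdd c (a.scope i)),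
            prodRel Q a.rel⟩
          idb := some ⟨c + rule.head.arity,
            Fin.append (Fin.natAdd r) (fun i => Fin.castAdd c (rule.head.scope i)),
            prodRel Q rule.head.rel⟩
          edb := (rule.edb.map (Atom.remap (Fin.castAdd c))).dedup
          head_arity := by
            show c + a.arity ≤ r + c
            have := rule.idb_arity a hamem; omega
          idb_arity := by
            rintro a' ha'; rcases Option.mem_some_iff.mp ha' with rfl
            show c + rule.head.arity ≤ r + c
            have := rule.head_arity; omega
          edb_arity := by
            intro b' hb'; rcases hmem' b' hb' with ⟨b, hb, rfl⟩
            show b.arity ≤ r + c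
            have := rule.edb_arity b hb; omega
          edb_basic := by
            intro b' hb'; rcases hmem' b' hb' with ⟨b, hb, rfl⟩
            exact rule.edb_basic b hb
          nodup := List.nodup_dedup _
          consistent := by
            intro f hi he
            have hia : _ ∈ prodRel Q rule.head.rel := hi _ rfl
            have hQf : (fun t => f (Fin.natAdd r t)) ∈ Q := by
              have := hia.1
              simpa only [Fin.append_left] using this
            have hheadf : rule.head.holds (fun j => f (Fin.castAdd c j)) := by
              have := hia.2
              show (fun i => f (Fin.castAdd c (rule.head.scope i))) ∈ rule.head.rel
              simpa only [Fin.append_right] using this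
            have haf : a.holds (fun j => f (Fin.castAdd c j)) :=
              rule.mirror a hamem (fun j => f (Fin.castAdd c j)) hheadf
                (fun b hb => he _ (hmem b hb))
            refine ⟨?_, ?_⟩
            · show (fun t => f (Fin.append (Fin.natAdd r)
                (fun i => Fin.castAdd c (a.scope i)) (Fin.castAdd _ t))) ∈ Q
              simpa only [Fin.append_left] using hQf
            · show (fun i => f (Fin.append (Fin.natAdd r)
                (fun i => Fin.castAdd c (a.scope i)) (Fin.natAdd c i))) ∈ a.rel
              simpa only [Fin.append_right, Atom.holds] using haf
          mirror := by
            rintro a' ha' f hh he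
            rcases Option.mem_some_iff.mp ha' with rfl
            have hQf : (fun t => f (Fin.natAdd r t)) ∈ Q := by
              have := hh.1
              simpa only [Fin.append_left] using this
            have haf : a.holds (fun j => f (Fin.castAdd c j)) := by
              have := hh.2
              show (fun i => f (Fin.castAdd c (a.scope i))) ∈ a.rel
              simpa only [Fin.append_right] using this
            have hhead : rule.head.holds (fun j => f (Fin.castAdd c j)) :=
              rule.consistent (fun j => f (Fin.castAdd c j))
                (by
                  rw [hopt]; rintro a' ha'
                  rcases Option.mem_some_iff.mp ha' with rfl
                  exact haf)
                (fun b hb => he _ (hmem b hb))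
            refine ⟨?_, ?_⟩
            · show (fun t => f (Fin.append (Fin.natAdd r)
                (fun i => Fin.castAdd c (rule.head.scope i)) (Fin.castAdd _ t))) ∈ Q
              simpa only [Fin.append_left] using hQf
            · show (fun i => f (Fin.append (Fin.natAdd r)
                (fun i => Fin.castAdd c (rule.head.scope i)) (Fin.natAdd c i))) ∈ rule.head.rel
              simpa only [Fin.append_right, Atom.holds] using hhead }
        (Fin.append ω π)
        (by
          rintro a' ha'; rcases Option.mem_some_iff.mp ha' with rfl
          show Derives 𝔸 (r + c) I _ (prodRel Q rule.head.rel)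
          rw [hheadeq]; exact hQR)
        hedbev
      have heq : (fun i => (Fin.append ω π)
          ((Fin.append (Fin.natAdd r) (fun i => Fin.castAdd c (a.scope i))) i))
          = Fin.append π (fun i => ω (a.scope i)) := by
        funext i
        induction i using Fin.addCases with
        | left t => simp only [Fin.append_left, Fin.append_right]
        | right t => simp only [Fin.append_left, Fin.append_right]
      rw [heq] at hstep
      exact ih a hamem (rule.idb_arity a hamem) hstep

end Uncarry
section Incorporate
variable {A V : Type} {𝔸 : RelStruct A} {I : Instance A V} {r c : ℕ}

lemma incorporate_aux (hI : IsCSPInstance 𝔸 I) (v0 : V) {π : Fin c → V}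
    {Q : Set (Fin c → A)} (hQ : Derives 𝔸 (r + c) I π Q) {n : ℕ} {ρ : Fin n → V}
    {R : Set (Fin n → A)} (D : Derives 𝔸 r I ρ R) (e : Fin n → Fin c)
    (he : ρ = fun i => π (e i)) (hn : n ≤ c) :
    Derives 𝔸 (r + c) I π (Q ∩ {g | (fun i => g (e i)) ∈ R}) := by
  classical
  cases D with
  | base ρ R hc =>
    have hstep := Derives.step (𝔸 := 𝔸) (I := I)
      { head := ⟨c, Fin.natAdd r, Q ∩ {g | (fun i => g (e i)) ∈ R}⟩
        idb := some ⟨c, Fin.natAdd r, Q⟩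
        edb := [⟨n, fun i => Fin.natAdd r (e i), R⟩]
        head_arity := by show c ≤ r + c; omega
        idb_arity := by
          rintro a ha; rcases Option.mem_some_iff.mp ha with rfl; show c ≤ r + c; omega
        edb_arity := by
          rintro a ha; rcases List.mem_singleton.mp ha with rfl; show n ≤ r + c; omega
        edb_basic := by
          rintro a ha; rcases List.mem_singleton.mp ha with rfl
          exact hI _ hc
        nodup := List.nodup_singleton _
        consistent := by
          intro f hi hedb
          have hQf : (fun t => f (Fin.natAdd r t)) ∈ Q := hi _ rfl
          have hRf : (fun i => f (Fin.natAdd r (e i))) ∈ R :=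
            hedb _ (List.mem_singleton_self _)
          exact ⟨hQf, hRf⟩
        mirror := by
          rintro a ha f hh _he
          rcases Option.mem_some_iff.mp ha with rfl
          exact hh.1 }
      (Fin.append (fun _ : Fin r => v0) π)
      (by
        rintro a ha; rcases Option.mem_some_iff.mp ha with rfl
        have heq : (fun t : Fin c => (Fin.append (fun _ : Fin r => v0) π) (Fin.natAdd r t))
            = π := by funext t; exact Fin.append_right _ _ t
        show Derives 𝔸 (r + c) I _ Q
        rw [heq]; exact hQ)
      (by
        rintro a ha; rcases List.mem_singleton.mp ha with rfl
        have heq : (fun i : Fin n =>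
            (Fin.append (fun _ : Fin r => v0) π) (Fin.natAdd r (e i))) = ρ := by
          funext i; rw [Fin.append_right]; exact (congrFun he i).symm
        have hsig : (⟨n, (fun i =>
            (Fin.append (fun _ : Fin r => v0) π) (Fin.natAdd r (e i)), R)⟩ :
            Σ n : ℕ, (Fin n → V) × Set (Fin n → A)) = ⟨n, (ρ, R)⟩ :=
          congrArg (fun u : Fin n → V =>
            (⟨n, (u, R)⟩ : Σ n : ℕ, (Fin n → V) × Set (Fin n → A))) heq
        show (⟨n, (fun i =>
            (Fin.append (fun _ : Fin r => v0) π) (Fin.natAdd r (e i)), R)⟩ :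
            Σ n : ℕ, (Fin n → V) × Set (Fin n → A)) ∈ I.constraints
        rw [hsig]; exact hc)
    have heq : (fun t : Fin c => (Fin.append (fun _ : Fin r => v0) π) (Fin.natAdd r t))
        = π := by funext t; exact Fin.append_right _ _ t
    rw [heq] at hstep
    exact hstep
  | step rule ω hidb hedb =>
    have hcarry := carry hI v0 hQ (Derives.step rule ω hidb hedb) rule.head_arity
    rw [he] at hcarry
    have hstep := Derives.step (𝔸 := 𝔸) (I := I)
      { head := ⟨c, Fin.natAdd r, Q ∩ {g | (fun i => g (e i)) ∈ rule.head.rel}⟩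
        idb := some ⟨c + rule.head.arity,
          Fin.append (Fin.natAdd r) (fun i => Fin.natAdd r (e i)), prodRel Q rule.head.rel⟩
        edb := []
        head_arity := by show c ≤ r + c; omega
        idb_arity := by
          rintro a ha; rcases Option.mem_some_iff.mp ha with rfl
          show c + rule.head.arity ≤ r + c
          have := rule.head_arity; omega
        edb_arity := by rintro a ha; exact absurd ha List.not_mem_nil
        edb_basic := by rintro a ha; exact absurd ha List.not_mem_nil
        nodup := List.nodup_nil
        consistent := by
          intro f hi _he
          have hia : _ ∈ prodRel Q rule.head.rel := hi _ rfl
          have hQf : (fun t => f (Fin.natAdd r t)) ∈ Q := by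
            have := hia.1
            simpa only [Fin.append_left] using this
          have hRf : (fun i => f (Fin.natAdd r (e i))) ∈ rule.head.rel := by
            have := hia.2
            simpa only [Fin.append_right] using this
          exact ⟨hQf, hRf⟩
        mirror := by
          rintro a ha f hh _he
          rcases Option.mem_some_iff.mp ha with rfl
          refine ⟨?_, ?_⟩
          · show (fun t => f (Fin.append (Fin.natAdd r)
              (fun i => Fin.natAdd r (e i)) (Fin.castAdd rule.head.arity t))) ∈ Q
            simpa only [Fin.append_left] using hh.1
          · show (fun i => f (Fin.append (Fin.natAdd r)
              (fun i => Fin.natAdd r (e i)) (Fin.natAdd c i))) ∈ rule.head.rel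
            simpa only [Fin.append_right, Set.mem_setOf_eq] using hh.2 }
      (Fin.append (fun _ : Fin r => v0) π)
      (by
        rintro a ha; rcases Option.mem_some_iff.mp ha with rfl
        have heq : (fun i => (Fin.append (fun _ : Fin r => v0) π)
            ((Fin.append (Fin.natAdd r) (fun i => Fin.natAdd r (e i))) i))
            = Fin.append π (fun i => π (e i)) := by
          funext i
          induction i using Fin.addCases with
          | left t => simp only [Fin.append_left, Fin.append_right]
          | right t => simp only [Fin.append_left, Fin.append_right]
        show Derives 𝔸 (r + c) I _ (prodRel Q rule.head.rel)
        rw [heq]; exact hcarry)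
      (by rintro a ha; exact absurd ha List.not_mem_nil)
    have heq : (fun t : Fin c => (Fin.append (fun _ : Fin r => v0) π) (Fin.natAdd r t))
        = π := by funext t; exact Fin.append_right _ _ t
    rw [heq] at hstep
    exact hstep

lemma unincorporate_aux (hI : IsCSPInstance 𝔸 I) (v0 : V) {π : Fin c → V}
    {Q : Set (Fin c → A)} {n : ℕ} {ρ : Fin n → V}
    {R : Set (Fin n → A)} (D : Derives 𝔸 r I ρ R) (e : Fin n → Fin c)
    (he : ρ = fun i => π (e i)) (hn : n ≤ c)
    (hQ : Derives 𝔸 (r + c) I π (Q ∩ {g | (fun i => g (e i)) ∈ R})) :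
    Derives 𝔸 (r + c) I π Q := by
  classical
  cases D with
  | base ρ R hc =>
    have hstep := Derives.step (𝔸 := 𝔸) (I := I)
      { head := ⟨c, Fin.natAdd r, Q⟩
        idb := some ⟨c, Fin.natAdd r, Q ∩ {g | (fun i => g (e i)) ∈ R}⟩
        edb := [⟨n, fun i => Fin.natAdd r (e i), R⟩]
        head_arity := by show c ≤ r + c; omega
        idb_arity := by
          rintro a ha; rcases Option.mem_some_iff.mp ha with rfl; show c ≤ r + c; omega
        edb_arity := by
          rintro a ha; rcases List.mem_singleton.mp ha with rfl; show n ≤ r + c; omega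
        edb_basic := by
          rintro a ha; rcases List.mem_singleton.mp ha with rfl
          exact hI _ hc
        nodup := List.nodup_singleton _
        consistent := by
          intro f hi _he
          exact (hi _ rfl).1
        mirror := by
          rintro a ha f hh hedb
          rcases Option.mem_some_iff.mp ha with rfl
          exact ⟨hh, hedb _ (List.mem_singleton_self _)⟩ }
      (Fin.append (fun _ : Fin r => v0) π)
      (by
        rintro a ha; rcases Option.mem_some_iff.mp ha with rfl
        have heq : (fun t : Fin c => (Fin.append (fun _ : Fin r => v0) π) (Fin.natAdd r t))
            = π := by funext t; exact Fin.append_right _ _ t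
        show Derives 𝔸 (r + c) I _ (Q ∩ {g | (fun i => g (e i)) ∈ R})
        rw [heq]; exact hQ)
      (by
        rintro a ha; rcases List.mem_singleton.mp ha with rfl
        have heq : (fun i : Fin n =>
            (Fin.append (fun _ : Fin r => v0) π) (Fin.natAdd r (e i))) = ρ := by
          funext i; rw [Fin.append_right]; exact (congrFun he i).symm
        have hsig : (⟨n, (fun i =>
            (Fin.append (fun _ : Fin r => v0) π) (Fin.natAdd r (e i)), R)⟩ :
            Σ n : ℕ, (Fin n → V) × Set (Fin n → A)) = ⟨n, (ρ, R)⟩ :=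
          congrArg (fun u : Fin n → V =>
            (⟨n, (u, R)⟩ : Σ n : ℕ, (Fin n → V) × Set (Fin n → A))) heq
        show (⟨n, (fun i =>
            (Fin.append (fun _ : Fin r => v0) π) (Fin.natAdd r (e i)), R)⟩ :
            Σ n : ℕ, (Fin n → V) × Set (Fin n → A)) ∈ I.constraints
        rw [hsig]; exact hc)
    have heq : (fun t : Fin c => (Fin.append (fun _ : Fin r => v0) π) (Fin.natAdd r t))
        = π := by funext t; exact Fin.append_right _ _ t
    rw [heq] at hstep
    exact hstep
  | step rule ω hidb hedb =>
    have hstep := Derives.step (𝔸 := 𝔸) (I := I)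
      { head := ⟨c + rule.head.arity,
          Fin.append (Fin.natAdd r) (fun i => Fin.natAdd r (e i)), prodRel Q rule.head.rel⟩
        idb := some ⟨c, Fin.natAdd r, Q ∩ {g | (fun i => g (e i)) ∈ rule.head.rel}⟩
        edb := []
        head_arity := by
          show c + rule.head.arity ≤ r + c
          have := rule.head_arity; omega
        idb_arity := by
          rintro a ha; rcases Option.mem_some_iff.mp ha with rfl; show c ≤ r + c; omega
        edb_arity := by rintro a ha; exact absurd ha List.not_mem_nil
        edb_basic := by rintro a ha; exact absurd ha List.not_mem_nil
        nodup := List.nodup_nil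
        consistent := by
          intro f hi _he
          have hia := hi _ rfl
          refine ⟨?_, ?_⟩
          · show (fun t => f (Fin.append (Fin.natAdd r)
              (fun i => Fin.natAdd r (e i)) (Fin.castAdd rule.head.arity t))) ∈ Q
            simpa only [Fin.append_left] using hia.1
          · show (fun i => f (Fin.append (Fin.natAdd r)
              (fun i => Fin.natAdd r (e i)) (Fin.natAdd c i))) ∈ rule.head.rel
            simpa only [Fin.append_right, Set.mem_setOf_eq] using hia.2
        mirror := by
          rintro a ha f hh _he
          rcases Option.mem_some_iff.mp ha with rfl
          have hQf : (fun t => f (Fin.natAdd r t)) ∈ Q := by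
            have := hh.1
            simpa only [Fin.append_left] using this
          have hRf : (fun i => f (Fin.natAdd r (e i))) ∈ rule.head.rel := by
            have := hh.2
            simpa only [Fin.append_right] using this
          exact ⟨hQf, hRf⟩ }
      (Fin.append (fun _ : Fin r => v0) π)
      (by
        rintro a ha; rcases Option.mem_some_iff.mp ha with rfl
        have heq : (fun t : Fin c => (Fin.append (fun _ : Fin r => v0) π) (Fin.natAdd r t))
            = π := by funext t; exact Fin.append_right _ _ t
        show Derives 𝔸 (r + c) I _ (Q ∩ {g | (fun i => g (e i)) ∈ rule.head.rel})
        rw [heq]; exact hQ)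
      (by rintro a ha; exact absurd ha List.not_mem_nil)
    have heq : (fun i => (Fin.append (fun _ : Fin r => v0) π)
        ((Fin.append (Fin.natAdd r) (fun i => Fin.natAdd r (e i))) i))
        = Fin.append π (fun i => π (e i)) := by
      funext i
      induction i using Fin.addCases with
      | left t => simp only [Fin.append_left, Fin.append_right]
      | right t => simp only [Fin.append_left, Fin.append_right]
    rw [heq] at hstep
    rw [← he] at hstep
    exact uncarry hI v0 (Derives.step rule ω hidb hedb) rule.head_arity hstep

end Incorporate
section Indexing
variable {A V : Type}

/-- The index of coordinate `j` of block `i` in `Fin (k * s)`. -/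
def iotaIdx {k s : ℕ} (i : Fin s) (j : Fin k) : Fin (k * s) :=
  ⟨i.1 * k + j.1, by
    calc i.1 * k + j.1 < i.1 * k + k := by omega
      _ = (i.1 + 1) * k := by ring
      _ ≤ s * k := Nat.mul_le_mul_right k i.2
      _ = k * s := Nat.mul_comm s k⟩

/-- The index of coordinate `j` of block `i` in `Fin (na * k)`. -/
def packIdx {na k : ℕ} (i : Fin na) (j : Fin k) : Fin (na * k) :=
  ⟨i.1 * k + j.1, by
    calc i.1 * k + j.1 < i.1 * k + k := by omega
      _ = (i.1 + 1) * k := by ring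
      _ ≤ na * k := Nat.mul_le_mul_right k i.2⟩

lemma packIdx_divNat {na k : ℕ} (i : Fin na) (j : Fin k) : (packIdx i j).divNat = i := by
  have hk : 0 < k := lt_of_le_of_lt (Nat.zero_le _) j.2
  apply Fin.ext
  show (i.1 * k + j.1) / k = i.1
  rw [Nat.mul_comm, Nat.mul_add_div hk, Nat.div_eq_of_lt j.2]
  omega

lemma packIdx_modNat {na k : ℕ} (i : Fin na) (j : Fin k) : (packIdx i j).modNat = j := by
  apply Fin.ext
  show (i.1 * k + j.1) % k = j.1
  rw [Nat.mul_comm, Nat.mul_add_mod, Nat.mod_eq_of_lt j.2]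

/-- Embeds the unpacked coordinates of an atom scope into the unpacked context. -/
def eMap {k s na : ℕ} (sc : Fin na → Fin s) : Fin (na * k) → Fin (k * s) :=
  fun i => iotaIdx (sc i.divNat) i.modNat

/-- The unpacked context tuple of `ω`. -/
def piMap {X : Type} {k s : ℕ} (hk : 0 < k) (ω : Fin s → Fin k → X) : Fin (k * s) → X :=
  fun t => ω ⟨t.1 / k, (Nat.div_lt_iff_lt_mul hk).mpr
      (by rw [Nat.mul_comm s k]; exact t.2)⟩ ⟨t.1 % k, Nat.mod_lt _ hk⟩

lemma piMap_iota {X : Type} {k s : ℕ} (hk : 0 < k) (ω : Fin s → Fin k → X)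
    (i : Fin s) (j : Fin k) : piMap hk ω (iotaIdx i j) = ω i j := by
  show ω ⟨(i.1 * k + j.1) / k, _⟩ ⟨(i.1 * k + j.1) % k, _⟩ = ω i j
  have h1 : (i.1 * k + j.1) / k = i.1 := by
    rw [Nat.mul_comm, Nat.mul_add_div hk, Nat.div_eq_of_lt j.2]; omega
  have h2 : (i.1 * k + j.1) % k = j.1 := by
    rw [Nat.mul_comm, Nat.mul_add_mod, Nat.mod_eq_of_lt j.2]
  exact congr (congrArg ω (Fin.ext h1)) (Fin.ext h2)

lemma unpack_eq_pi {k s na : ℕ} (hk : 0 < k) (ω : Fin s → Fin k → V)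
    (sc : Fin na → Fin s) :
    unpackTuple (fun i => ω (sc i)) = fun i => piMap hk ω (eMap sc i) := by
  funext i
  show ω (sc i.divNat) i.modNat = piMap hk ω (iotaIdx (sc i.divNat) i.modNat)
  rw [piMap_iota]

lemma pull_iff {k s na : ℕ} (sc : Fin na → Fin s) (rel : Set (Fin na → Fin k → A))
    (g : Fin (k * s) → A) :
    ((fun i => g (eMap sc i)) ∈ unpackRel rel) ↔
      ((fun i j => g (iotaIdx (sc i) j)) ∈ rel) := by
  constructor
  · rintro ⟨u, hu, hv⟩
    have heq : (fun i j => g (iotaIdx (sc i) j)) = u := by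
      funext i j
      have := hv (packIdx i j)
      rw [packIdx_divNat, packIdx_modNat] at this
      have heM : eMap (k := k) sc (packIdx i j) = iotaIdx (sc i) j := by
        show iotaIdx (sc (packIdx i j).divNat) (packIdx i j).modNat = iotaIdx (sc i) j
        rw [packIdx_divNat, packIdx_modNat]
      rw [← heM]
      exact this
    rw [heq]; exact hu
  · intro h
    exact ⟨fun i j => g (iotaIdx (sc i) j), h, fun i => rfl⟩

lemma arity_mul_le {na k s : ℕ} (h : na ≤ s) : na * k ≤ k * s := by
  calc na * k ≤ s * k := Nat.mul_le_mul_right k h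
    _ = k * s := Nat.mul_comm s k

lemma unpackRel_empty {k n : ℕ} :
    unpackRel (∅ : Set (Fin n → Fin k → A)) = (∅ : Set (Fin (n * k) → A)) := by
  ext t
  simp [unpackRel]

end Indexing

section AtomLists
variable {A V : Type} {𝔸 : RelStruct A} {I : Instance A V} {r k s : ℕ}
  {𝔹 : RelStruct (Fin k → A)}

lemma mem_foldl_atoms (l : List (Atom (Fin k → A) s)) (Q : Set (Fin (k * s) → A))
    (x : Fin (k * s) → A) :
    x ∈ l.foldl (fun Q b => Q ∩ {g | (fun i => g (eMap b.scope i)) ∈ unpackRel b.rel}) Q ↔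
      x ∈ Q ∧ ∀ b ∈ l, (fun i => x (eMap b.scope i)) ∈ unpackRel b.rel := by
  induction l generalizing Q with
  | nil => simp
  | cons b l ih =>
    simp only [List.foldl_cons, ih, Set.mem_inter_iff, Set.mem_setOf_eq, List.mem_cons]
    constructor
    · rintro ⟨⟨h1, h2⟩, h3⟩
      exact ⟨h1, by rintro b' (rfl | hb'); exacts [h2, h3 b' hb']⟩
    · rintro ⟨h1, h2⟩
      exact ⟨⟨h1, h2 b (Or.inl rfl)⟩, fun b' hb' => h2 b' (Or.inr hb')⟩

lemma incorporate_atoms (hI : IsCSPInstance 𝔸 I) (v0 : V) {π : Fin (k * s) → V}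
    (l : List (Atom (Fin k → A) s))
    (hD : ∀ b ∈ l, Derives 𝔸 r I (fun i => π (eMap b.scope i)) (unpackRel b.rel))
    (hn : ∀ b ∈ l, b.arity ≤ s)
    {Q : Set (Fin (k * s) → A)} (hQ : Derives 𝔸 (r + k * s) I π Q) :
    Derives 𝔸 (r + k * s) I π
      (l.foldl (fun Q b => Q ∩ {g | (fun i => g (eMap b.scope i)) ∈ unpackRel b.rel}) Q) := by
  induction l generalizing Q with
  | nil => exact hQ
  | cons b l ih =>
    simp only [List.foldl_cons]
    exact ih (fun b' hb' => hD b' (List.mem_cons_of_mem _ hb'))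
      (fun b' hb' => hn b' (List.mem_cons_of_mem _ hb'))
      (incorporate_aux hI v0 hQ (hD b (List.mem_cons_self)) (eMap b.scope) rfl
        (arity_mul_le (hn b (List.mem_cons_self))))

lemma unincorporate_atoms (hI : IsCSPInstance 𝔸 I) (v0 : V) {π : Fin (k * s) → V}
    (l : List (Atom (Fin k → A) s))
    (hD : ∀ b ∈ l, Derives 𝔸 r I (fun i => π (eMap b.scope i)) (unpackRel b.rel))
    (hn : ∀ b ∈ l, b.arity ≤ s)
    {Q : Set (Fin (k * s) → A)}
    (hQ : Derives 𝔸 (r + k * s) I π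
      (l.foldl (fun Q b => Q ∩ {g | (fun i => g (eMap b.scope i)) ∈ unpackRel b.rel}) Q)) :
    Derives 𝔸 (r + k * s) I π Q := by
  induction l generalizing Q with
  | nil => exact hQ
  | cons b l ih =>
    simp only [List.foldl_cons] at hQ
    have := ih (fun b' hb' => hD b' (List.mem_cons_of_mem _ hb'))
      (fun b' hb' => hn b' (List.mem_cons_of_mem _ hb')) hQ
    exact unincorporate_aux hI v0 (hD b (List.mem_cons_self)) (eMap b.scope) rfl
      (arity_mul_le (hn b (List.mem_cons_self))) this

end AtomLists
section Simulate
variable {A V : Type} {𝔸 : RelStruct A} {I : Instance A V} {r k s : ℕ}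
  {𝔹 : RelStruct (Fin k → A)}

lemma simulate_step (hI : IsCSPInstance 𝔸 I) (hk : 0 < k) (hs : 0 < s)
    (rl : Rule (Fin k → A) 𝔹 s) (ω : Fin s → Fin k → V)
    (hD_edb : ∀ b ∈ rl.edb,
      Derives 𝔸 r I (fun i => (piMap hk ω) (eMap b.scope i)) (unpackRel b.rel))
    (hChild : ∀ a ∈ rl.idb, Derives 𝔸 (r + k * s) I
      (unpackTuple (fun i => ω (a.scope i))) (unpackRel a.rel)) :
    Derives 𝔸 (r + k * s) I
      (unpackTuple (fun i => ω (rl.head.scope i))) (unpackRel rl.head.rel) := by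
  classical
  have v0 : V := ω ⟨0, hs⟩ ⟨0, hk⟩
  have heqπ : (fun t : Fin (k * s) =>
      (Fin.append (fun _ : Fin r => v0) (piMap hk ω)) (Fin.natAdd r t)) = piMap hk ω := by
    funext t; exact Fin.append_right _ _ t
  have hedbar : ∀ b ∈ rl.edb, b.arity ≤ s := rl.edb_arity
  have final : ∀ Q0 : Set (Fin (k * s) → A),
      Derives 𝔸 (r + k * s) I (piMap hk ω) Q0 →
      (∀ g : Fin (k * s) → A, g ∈ Q0 →
        ∀ a ∈ rl.idb, a.holds (fun i j => g (iotaIdx i j))) →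
      (∀ g : Fin (k * s) → A,
        (fun i => g (eMap rl.head.scope i)) ∈ unpackRel rl.head.rel →
        (∀ b ∈ rl.edb, (fun i => g (eMap b.scope i)) ∈ unpackRel b.rel) → g ∈ Q0) →
      Derives 𝔸 (r + k * s) I
        (unpackTuple (fun i => ω (rl.head.scope i))) (unpackRel rl.head.rel) := by
    intro Q0 hQ0 hfwd hbwd
    have hQA := incorporate_atoms hI v0 rl.edb hD_edb hedbar hQ0
    have hstep3 := Derives.step (𝔸 := 𝔸) (I := I)
      { head := ⟨k * s, Fin.natAdd r,
          rl.edb.foldl (fun Q b => Q ∩ {g | (fun i => g (eMap b.scope i)) ∈ unpackRel b.rel})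
            {g | (fun i => g (eMap rl.head.scope i)) ∈ unpackRel rl.head.rel}⟩
        idb := some ⟨k * s, Fin.natAdd r,
          rl.edb.foldl (fun Q b => Q ∩ {g | (fun i => g (eMap b.scope i)) ∈ unpackRel b.rel})
            Q0⟩
        edb := []
        head_arity := by show k * s ≤ r + k * s; omega
        idb_arity := by
          rintro a ha; rcases Option.mem_some_iff.mp ha with rfl
          show k * s ≤ r + k * s; omega
        edb_arity := by rintro a ha; exact absurd ha List.not_mem_nil
        edb_basic := by rintro a ha; exact absurd ha List.not_mem_nil
        nodup := List.nodup_nil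
        consistent := by
          intro f hi _he
          have hfc : (fun t => f (Fin.natAdd r t)) ∈
              rl.edb.foldl
                (fun Q b => Q ∩ {g | (fun i => g (eMap b.scope i)) ∈ unpackRel b.rel}) Q0 :=
            hi _ rfl
          rcases (mem_foldl_atoms rl.edb Q0 _).mp hfc with ⟨h0, hpl⟩
          have hG : rl.head.holds (fun i j => f (Fin.natAdd r (iotaIdx i j))) :=
            rl.consistent (fun i j => f (Fin.natAdd r (iotaIdx i j)))
              (fun a ha => hfwd _ h0 a ha)
              (fun b hb =>
                (pull_iff b.scope b.rel (fun t => f (Fin.natAdd r t))).mp (hpl b hb))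
          show (fun t => f (Fin.natAdd r t)) ∈
            rl.edb.foldl
              (fun Q b => Q ∩ {g | (fun i => g (eMap b.scope i)) ∈ unpackRel b.rel})
              {g | (fun i => g (eMap rl.head.scope i)) ∈ unpackRel rl.head.rel}
          exact (mem_foldl_atoms rl.edb _ _).mpr
            ⟨(pull_iff rl.head.scope rl.head.rel (fun t => f (Fin.natAdd r t))).mpr hG, hpl⟩
        mirror := by
          rintro a' ha' f hh _he
          rcases Option.mem_some_iff.mp ha' with rfl
          have hh' : (fun t => f (Fin.natAdd r t)) ∈
              rl.edb.foldl
                (fun Q b => Q ∩ {g | (fun i => g (eMap b.scope i)) ∈ unpackRel b.rel})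
                {g | (fun i => g (eMap rl.head.scope i)) ∈ unpackRel rl.head.rel} := hh
          rcases (mem_foldl_atoms rl.edb _ _).mp hh' with ⟨hH, hpl⟩
          show (fun t => f (Fin.natAdd r t)) ∈
            rl.edb.foldl
              (fun Q b => Q ∩ {g | (fun i => g (eMap b.scope i)) ∈ unpackRel b.rel}) Q0
          exact (mem_foldl_atoms rl.edb _ _).mpr ⟨hbwd _ hH hpl, hpl⟩ }
      (Fin.append (fun _ : Fin r => v0) (piMap hk ω))
      (by
        rintro a ha; rcases Option.mem_some_iff.mp ha with rfl
        show Derives 𝔸 (r + k * s) I _ _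
        rw [heqπ]; exact hQA)
      (by rintro a ha; exact absurd ha List.not_mem_nil)
    rw [heqπ] at hstep3
    have hPH := unincorporate_atoms hI v0 rl.edb hD_edb hedbar hstep3
    have hstep5 := Derives.step (𝔸 := 𝔸) (I := I)
      { head := ⟨rl.head.arity * k, fun i => Fin.natAdd r (eMap rl.head.scope i),
          unpackRel rl.head.rel⟩
        idb := some ⟨k * s, Fin.natAdd r,
          {g | (fun i => g (eMap rl.head.scope i)) ∈ unpackRel rl.head.rel}⟩
        edb := []
        head_arity := by
          have := arity_mul_le (k := k) rl.head_arity
          show rl.head.arity * k ≤ r + k * s; omega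
        idb_arity := by
          rintro a ha; rcases Option.mem_some_iff.mp ha with rfl
          show k * s ≤ r + k * s; omega
        edb_arity := by rintro a ha; exact absurd ha List.not_mem_nil
        edb_basic := by rintro a ha; exact absurd ha List.not_mem_nil
        nodup := List.nodup_nil
        consistent := by
          intro f hi _he
          exact hi ⟨k * s, Fin.natAdd r,
            {g | (fun i => g (eMap rl.head.scope i)) ∈ unpackRel rl.head.rel}⟩ rfl
        mirror := by
          rintro a' ha' f hh _he
          rcases Option.mem_some_iff.mp ha' with rfl
          exact hh }
      (Fin.append (fun _ : Fin r => v0) (piMap hk ω))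
      (by
        rintro a ha; rcases Option.mem_some_iff.mp ha with rfl
        show Derives 𝔸 (r + k * s) I _ _
        rw [heqπ]; exact hPH)
      (by rintro a ha; exact absurd ha List.not_mem_nil)
    have heq5 : (fun i => (Fin.append (fun _ : Fin r => v0) (piMap hk ω))
        (Fin.natAdd r (eMap rl.head.scope i)))
        = unpackTuple (fun i => ω (rl.head.scope i)) := by
      rw [unpack_eq_pi hk ω rl.head.scope]
      funext i; exact Fin.append_right _ _ _
    rw [heq5] at hstep5
    exact hstep5
  rcases hopt : rl.idb with _ | a
  · refine final Set.univ ?_ ?_ ?_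
    · have hstep0 := Derives.step (𝔸 := 𝔸) (I := I)
        { head := ⟨k * s, Fin.natAdd r, Set.univ⟩
          idb := none
          edb := []
          head_arity := by show k * s ≤ r + k * s; omega
          idb_arity := by rintro a ha; exact absurd ha (by simp [Option.mem_def])
          edb_arity := by rintro a ha; exact absurd ha List.not_mem_nil
          edb_basic := by rintro a ha; exact absurd ha List.not_mem_nil
          nodup := List.nodup_nil
          consistent := by intro f _ _; exact Set.mem_univ _
          mirror := by rintro a ha; exact absurd ha (by simp [Option.mem_def]) }
        (Fin.append (fun _ : Fin r => v0) (piMap hk ω))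
        (by rintro a ha; exact absurd ha (by simp [Option.mem_def]))
        (by rintro a ha; exact absurd ha List.not_mem_nil)
      rw [heqπ] at hstep0
      exact hstep0
    · intro g _ a ha
      rw [hopt] at ha
      exact absurd ha (by simp [Option.mem_def])
    · intro g _ _; exact Set.mem_univ _
  · have hamem : a ∈ rl.idb := Option.mem_def.mpr hopt
    refine final {g | (fun i => g (eMap a.scope i)) ∈ unpackRel a.rel} ?_ ?_ ?_
    · have hch := hChild a hamem
      rw [unpack_eq_pi hk ω a.scope] at hch
      have hstep1 := Derives.step (𝔸 := 𝔸) (I := I)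
        { head := ⟨k * s, Fin.natAdd r,
            {g | (fun i => g (eMap a.scope i)) ∈ unpackRel a.rel}⟩
          idb := some ⟨a.arity * k, fun i => Fin.natAdd r (eMap a.scope i), unpackRel a.rel⟩
          edb := []
          head_arity := by show k * s ≤ r + k * s; omega
          idb_arity := by
            rintro a' ha'; rcases Option.mem_some_iff.mp ha' with rfl
            have := arity_mul_le (k := k) (rl.idb_arity a hamem)
            show a.arity * k ≤ r + k * s; omega
          edb_arity := by rintro a' ha'; exact absurd ha' List.not_mem_nil
          edb_basic := by rintro a' ha'; exact absurd ha' List.not_mem_nil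
          nodup := List.nodup_nil
          consistent := by
            intro f hi _he
            exact hi ⟨a.arity * k, fun i => Fin.natAdd r (eMap a.scope i),
              unpackRel a.rel⟩ rfl
          mirror := by
            rintro a' ha' f hh _he
            rcases Option.mem_some_iff.mp ha' with rfl
            exact hh }
        (Fin.append (fun _ : Fin r => v0) (piMap hk ω))
        (by
          rintro a' ha'; rcases Option.mem_some_iff.mp ha' with rfl
          have heq1 : (fun i => (Fin.append (fun _ : Fin r => v0) (piMap hk ω))
              (Fin.natAdd r (eMap a.scope i)))
              = fun i => piMap hk ω (eMap a.scope i) := by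
            funext i; exact Fin.append_right _ _ _
          show Derives 𝔸 (r + k * s) I _ _
          rw [heq1]; exact hch)
        (by rintro a' ha'; exact absurd ha' List.not_mem_nil)
      rw [heqπ] at hstep1
      exact hstep1
    · intro g hg a' ha'
      rw [hopt] at ha'
      rcases Option.mem_some_iff.mp ha' with rfl
      exact (pull_iff a.scope a.rel g).mp hg
    · intro g hH hpl
      have hGedb : ∀ b ∈ rl.edb, b.holds (fun i j => g (iotaIdx i j)) :=
        fun b hb => (pull_iff b.scope b.rel g).mp (hpl b hb)
      have hGhead : rl.head.holds (fun i j => g (iotaIdx i j)) :=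
        (pull_iff rl.head.scope rl.head.rel g).mp hH
      exact (pull_iff a.scope a.rel g).mpr
        (rl.mirror a hamem (fun i j => g (iotaIdx i j)) hGhead hGedb)

end Simulate


/-- stacking through a power of `A`.
Let `𝔸` be a relational structure on `A` and `𝔹` one on `A^k`, let `I` be an
instance of `CSP(𝔸)`, let `S_1, …, S_p` be basic relations of `𝔹` and
`σ_1, …, σ_p` tuples of elements of `V^k` such that
`𝒫_𝔸^r(I) ⊢ S̄_i(σ̄_i)` for each `i`, and `𝒫_𝔹^s(J) ⊢ G` where
`J = (V^k, {(σ_i, S_i)})`. Then `𝒫_𝔸^{r+ks}(I) ⊢ G`. -/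
theorem statement3 {A V : Type} [Finite A] (k : ℕ)
    (𝔸 : RelStruct A) (𝔹 : RelStruct (Fin k → A))
    (I : Instance A V) (hI : IsCSPInstance 𝔸 I)
    {p : ℕ} {m : Fin p → ℕ}
    (σ : ∀ i, Fin (m i) → (Fin k → V))
    (S : ∀ i, Set (Fin (m i) → (Fin k → A)))
    (hbasic : ∀ i, (⟨m i, S i⟩ : Σ n : ℕ, Set (Fin n → (Fin k → A))) ∈ 𝔹.basic)
    (r s : ℕ) (hr : 1 ≤ r) (hs : 1 ≤ s)
    (h1 : ∀ i, Derives 𝔸 r I (unpackTuple (σ i)) (unpackRel (S i)))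
    (h2 : DerivesGoal 𝔹 s
      (⟨{c | ∃ i, c = ⟨m i, σ i, S i⟩}⟩ : Instance (Fin k → A) (Fin k → V))) :
    DerivesGoal 𝔸 (r + k * s) I := by
  classical
  rcases Nat.eq_zero_or_pos k with hk0 | hk
  · subst hk0
    obtain ⟨ng, ρg, hng, hD⟩ := h2
    by_cases hsol : (⟨{c | ∃ i, c = ⟨m i, σ i, S i⟩}⟩ :
        Instance (Fin 0 → A) (Fin 0 → V)).Sol (fun _ => fun j : Fin 0 => j.elim0)
    · exact absurd (derives_sound hsol hD) (Set.notMem_empty _)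
    · rw [Instance.Sol] at hsol
      push_neg at hsol
      obtain ⟨cc, hcc, hfail⟩ := hsol
      obtain ⟨i, rfl⟩ := hcc
      have hSempty : unpackRel (S i) = (∅ : Set (Fin (m i * 0) → A)) := by
        ext t
        simp only [Set.mem_empty_iff_false, iff_false]
        rintro ⟨u, hu, -⟩
        apply hfail
        show (fun t => (fun (_ : Fin 0 → V) (j : Fin 0) => j.elim0) (σ i t)) ∈ S i
        have hueq : (fun t => (fun (_ : Fin 0 → V) (j : Fin 0) => j.elim0) (σ i t)) = u := by
          funext t j; exact j.elim0
        rw [hueq]; exact hu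
      have hgoal := h1 i
      rw [hSempty] at hgoal
      exact ⟨m i * 0, unpackTuple (σ i), by omega,
        derives_mono hr (by omega) hgoal⟩
  · have hfacts : ∀ cc ∈ (⟨{c | ∃ i, c = ⟨m i, σ i, S i⟩}⟩ :
        Instance (Fin k → A) (Fin k → V)).constraints,
        Derives 𝔸 r I (unpackTuple cc.2.1) (unpackRel cc.2.2) := by
      intro cc hcc
      obtain ⟨i, rfl⟩ := hcc
      exact h1 i
    have main : ∀ {nn : ℕ} {ρ : Fin nn → Fin k → V} {R : Set (Fin nn → Fin k → A)},
        Derives 𝔹 s (⟨{c | ∃ i, c = ⟨m i, σ i, S i⟩}⟩ :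
          Instance (Fin k → A) (Fin k → V)) ρ R →
        Derives 𝔸 (r + k * s) I (unpackTuple ρ) (unpackRel R) := by
      intro nn ρ R hder
      induction hder with
      | base ρ R hc =>
        exact derives_mono hr (Nat.le_add_right _ _) (hfacts _ hc)
      | step rl ω hidb hedb ih =>
        apply simulate_step hI hk hs rl ω
        · intro b hb
          have := hfacts _ (hedb b hb)
          rwa [unpack_eq_pi hk ω b.scope] at this
        · exact ih
    obtain ⟨ng, ρg, hng, hD⟩ := h2
    have hfin := main hD
    rw [unpackRel_empty] at hfin
    have hb := arity_mul_le (k := k) hng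
    exact ⟨ng * k, unpackTuple ρg, by omega, hfin⟩
end CSPPaper
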